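/- arXiv:1403.0257 — 2 statements merged into one kernel-verified Lean document; each statement's English description precedes it below -/
import Mathlib

section
/- Let K0 : Ω* × Ω* → ℂ be a positive definite kernel that is holomorphic in the first variable and anti-holomorphic in the second, and let K1 be another such positive definite kernel. Then the 2×2 matrix-valued kernel K_Γ(z,w) = [[K0(z,w), ∂_w̄ K0(z,w)],[∂_z K0(z,w), ∂_z ∂_w̄ K0(z,w) + K1(z,w)]] is positive definite. -/
open scoped InnerProductSpace

/-- A scalar kernel is positive definite on `Ω` if all its Gram sums are nonnegative reals. -/
def ScalarPosDefKernel (Ω : Set ℂ) (K : ℂ → ℂ → ℂ) : Prop :=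
  ∀ (m : ℕ) (z : Fin m → ℂ), (∀ i, z i ∈ Ω) → ∀ c : Fin m → ℂ,
    0 ≤ (∑ i, ∑ j, (starRingEnd ℂ) (c i) * K (z i) (z j) * c j).re ∧
    (∑ i, ∑ j, (starRingEnd ℂ) (c i) * K (z i) (z j) * c j).im = 0

/-- A `2 × 2` matrix-valued kernel is positive definite on `Ω` if all its Gram sums
against vectors in `ℂ²` are nonnegative reals. -/
def MatrixPosDefKernel (Ω : Set ℂ) (K : ℂ → ℂ → Matrix (Fin 2) (Fin 2) ℂ) : Prop :=
  ∀ (m : ℕ) (z : Fin m → ℂ), (∀ i, z i ∈ Ω) → ∀ v : Fin m → Fin 2 → ℂ,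
    0 ≤ (∑ i, ∑ j, ∑ a, ∑ b, (starRingEnd ℂ) (v i a) * K (z i) (z j) a b * v j b).re ∧
    (∑ i, ∑ j, ∑ a, ∑ b, (starRingEnd ℂ) (v i a) * K (z i) (z j) a b * v j b).im = 0

/-- The holomorphic derivative in the first variable. -/
noncomputable def Dz (K : ℂ → ℂ → ℂ) (z w : ℂ) : ℂ := deriv (fun u => K u w) z

/-- The anti-holomorphic derivative in the second variable. -/
noncomputable def Dwbar (K : ℂ → ℂ → ℂ) (z w : ℂ) : ℂ :=
  (starRingEnd ℂ) (deriv (fun u => (starRingEnd ℂ) (K z u)) w)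

lemma inner_hasDerivAt {H : Type*} [NormedAddCommGroup H] [InnerProductSpace ℂ H]
    (x : H) {γ : ℂ → H} {d : H} {z : ℂ} (h : HasDerivAt γ d z) :
    HasDerivAt (fun u => ⟪x, γ u⟫_ℂ) ⟪x, d⟫_ℂ z := by
  exact ((innerSL ℂ x).hasFDerivAt.comp_hasDerivAt z h)

/-- If `K0` and `K1` are positive definite sesqui-holomorphic kernels on `Ω*`, induced
by holomorphic Hilbert-space-valued maps `γ0, γ1`, then the matrix kernel
`K_Γ(z,w) = [[K0, ∂_w̄ K0],[∂_z K0, ∂_z∂_w̄ K0 + K1]]` is positive definite. -/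
theorem matrix_kernel_posdef
    {H : Type*} [NormedAddCommGroup H] [InnerProductSpace ℂ H] [CompleteSpace H]
    (Ω : Set ℂ) (hΩ : IsOpen Ω)
    (K0 K1 : ℂ → ℂ → ℂ)
    (hK0 : ScalarPosDefKernel Ω K0) (hK1 : ScalarPosDefKernel Ω K1)
    (γ0 γ1 : ℂ → H)
    (hγ0 : DifferentiableOn ℂ γ0 Ω) (hγ1 : DifferentiableOn ℂ γ1 Ω)
    (hrep0 : ∀ z ∈ Ω, ∀ w ∈ Ω, K0 z w = ⟪γ0 w, γ0 z⟫_ℂ)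
    (hrep1 : ∀ z ∈ Ω, ∀ w ∈ Ω, K1 z w = ⟪γ1 w, γ1 z⟫_ℂ)
    (KΓ : ℂ → ℂ → Matrix (Fin 2) (Fin 2) ℂ)
    (hKΓ : ∀ z ∈ Ω, ∀ w ∈ Ω, KΓ z w =
      !![K0 z w, Dwbar K0 z w;
         Dz K0 z w, Dz (fun u v => Dwbar K0 u v) z w + K1 z w]) :
    MatrixPosDefKernel Ω KΓ := by
  intro m z hz v
  set d0 : ℂ → H := fun u => deriv γ0 u with hd0
  have hder : ∀ u ∈ Ω, HasDerivAt γ0 (d0 u) u := fun u hu =>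
    ((hγ0 u hu).differentiableAt (hΩ.mem_nhds hu)).hasDerivAt
  have hDz : ∀ a ∈ Ω, ∀ w ∈ Ω, Dz K0 a w = ⟪γ0 w, d0 a⟫_ℂ := by
    intro a ha w hw
    have hev : (fun u => K0 u w) =ᶠ[nhds a] fun u => ⟪γ0 w, γ0 u⟫_ℂ := by
      filter_upwards [hΩ.mem_nhds ha] with u hu
      exact hrep0 u hu w hw
    rw [Dz, hev.deriv_eq]
    exact (inner_hasDerivAt (γ0 w) (hder a ha)).deriv
  have hDwbar : ∀ a ∈ Ω, ∀ w ∈ Ω, Dwbar K0 a w = ⟪d0 w, γ0 a⟫_ℂ := by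
    intro a ha w hw
    have hev : (fun u => (starRingEnd ℂ) (K0 a u)) =ᶠ[nhds w] fun u => ⟪γ0 a, γ0 u⟫_ℂ := by
      filter_upwards [hΩ.mem_nhds hw] with u hu
      rw [hrep0 a ha u hu, inner_conj_symm]
    rw [Dwbar, hev.deriv_eq, (inner_hasDerivAt (γ0 a) (hder w hw)).deriv, inner_conj_symm]
  have hDD : ∀ a ∈ Ω, ∀ w ∈ Ω, Dz (fun u v => Dwbar K0 u v) a w = ⟪d0 w, d0 a⟫_ℂ := by
    intro a ha w hw
    have hev : (fun u => Dwbar K0 u w) =ᶠ[nhds a] fun u => ⟪d0 w, γ0 u⟫_ℂ := by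
      filter_upwards [hΩ.mem_nhds ha] with u hu
      exact hDwbar u hu w hw
    rw [Dz, hev.deriv_eq]
    exact (inner_hasDerivAt (d0 w) (hder a ha)).deriv
  set g : Fin m → H := fun i => (starRingEnd ℂ) (v i 0) • γ0 (z i) + (starRingEnd ℂ) (v i 1) • d0 (z i) with hg
  set t : Fin m → H := fun i => (starRingEnd ℂ) (v i 1) • γ1 (z i) with ht
  have h1 : ∀ i j : Fin m,
      (∑ a, ∑ b, (starRingEnd ℂ) (v i a) * KΓ (z i) (z j) a b * v j b)
        = ⟪g j, g i⟫_ℂ + ⟪t j, t i⟫_ℂ := by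
    intro i j
    rw [hKΓ _ (hz i) _ (hz j), hDz _ (hz i) _ (hz j), hDwbar _ (hz i) _ (hz j),
      hDD _ (hz i) _ (hz j), hrep0 _ (hz i) _ (hz j), hrep1 _ (hz i) _ (hz j)]
    simp only [hg, ht, Fin.sum_univ_two, Matrix.of_apply, Matrix.cons_val', Matrix.cons_val_zero,
      Matrix.cons_val_one, Matrix.head_cons, Matrix.empty_val', Matrix.cons_val_fin_one,
      Matrix.head_fin_const, inner_add_left, inner_add_right, inner_smul_left,
      inner_smul_right, map_mul, Complex.conj_conj]
    ring
  have key : (∑ i, ∑ j, ∑ a, ∑ b, (starRingEnd ℂ) (v i a) * KΓ (z i) (z j) a b * v j b)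
      = ⟪∑ j, g j, ∑ i, g i⟫_ℂ + ⟪∑ j, t j, ∑ i, t i⟫_ℂ := by
    simp_rw [h1, Finset.sum_add_distrib, sum_inner, inner_sum]
    rw [Finset.sum_comm (f := fun j i => ⟪g j, g i⟫_ℂ),
      Finset.sum_comm (f := fun j i => ⟪t j, t i⟫_ℂ)]
  rw [key]
  constructor
  · simp only [Complex.add_re]
    have a1 : (0:ℝ) ≤ (⟪∑ j, g j, ∑ i, g i⟫_ℂ).re :=
      inner_self_nonneg (𝕜 := ℂ) (x := ∑ j, g j)
    have a2 : (0:ℝ) ≤ (⟪∑ j, t j, ∑ i, t i⟫_ℂ).re :=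
      inner_self_nonneg (𝕜 := ℂ) (x := ∑ j, t j)
    exact add_nonneg a1 a2
  · simp only [Complex.add_im]
    have a1 : (⟪∑ j, g j, ∑ i, g i⟫_ℂ).im = 0 :=
      inner_self_im (𝕜 := ℂ) (∑ j, g j)
    have a2 : (⟪∑ j, t j, ∑ i, t i⟫_ℂ).im = 0 :=
      inner_self_im (𝕜 := ℂ) (∑ j, t j)
    rw [a1, a2, add_zero]
end

section
/- For λ > 1 and μ > 0, the kernel K_Γ(z,w) = [[(1 − z w̄)^{−λ}, ∂_w̄ (1 − z w̄)^{−λ}],[∂_z (1 − z w̄)^{−λ}, ∂_z ∂_w̄ (1 − z w̄)^{−λ} + μ (1 − z w̄)^{−λ−2}]] on the unit disc 𝔻 × 𝔻 is positive definite. -/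
open Complex Metric Finset

/-! ### Binomial coefficients for the binomial series -/

noncomputable def bc (s : ℝ) (n : ℕ) : ℝ := (ascPochhammer ℝ n).eval s / n.factorial

lemma bc_zero (s : ℝ) : bc s 0 = 1 := by simp [bc]

lemma bc_succ (s : ℝ) (n : ℕ) : (n + 1 : ℝ) * bc s (n + 1) = (s + n) * bc s n := by
  have h : ((n + 1 : ℕ) : ℝ) ≠ 0 := by positivity
  simp only [bc, ascPochhammer_succ_eval, Nat.factorial_succ]
  push_cast
  field_simp

lemma bc_nonneg {s : ℝ} (hs : 0 ≤ s) (n : ℕ) : 0 ≤ bc s n := by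
  induction n with
  | zero => simp [bc_zero]
  | succ n ih =>
    have h := bc_succ s n
    have h1 : (0:ℝ) < n + 1 := by positivity
    nlinarith [Nat.cast_nonneg (α := ℝ) n]

lemma bc_shift (s : ℝ) (n : ℕ) : s * bc (s + 1) n = (n + 1) * bc s (n + 1) := by
  have key : (ascPochhammer ℝ (n + 1)).eval s = s * (ascPochhammer ℝ n).eval (s + 1) := by
    rw [ascPochhammer_succ_left]
    simp [Polynomial.eval_comp, mul_comm]
  simp only [bc, Nat.factorial_succ, key]
  have h : ((n + 1 : ℕ) : ℝ) ≠ 0 := by positivity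
  push_cast
  field_simp

lemma bc_shiftC (s : ℝ) (n : ℕ) :
    (s : ℂ) * (bc (s + 1) n : ℂ) = ((n : ℂ) + 1) * (bc s (n + 1) : ℂ) := by
  exact_mod_cast congrArg (Complex.ofReal) (bc_shift s n)

lemma bc_shift2 (s : ℝ) (n : ℕ) :
    s * (s + 1) * bc (s + 2) n = (n + 1) * (n + 2) * bc s (n + 2) := by
  have h1 := bc_shift (s + 1) n
  have h2 := bc_shift s (n + 1)
  have e : s + 1 + 1 = s + 2 := by ring
  rw [e] at h1
  have e2 : n + 1 + 1 = n + 2 := rfl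
  rw [e2] at h2
  push_cast at h1 h2 ⊢
  linear_combination s * h1 + ((n : ℝ) + 1) * h2

lemma bc_shift2C (s : ℝ) (n : ℕ) :
    (s : ℂ) * ((s : ℂ) + 1) * (bc (s + 2) n : ℂ)
      = ((n : ℂ) + 1) * ((n : ℂ) + 2) * (bc s (n + 2) : ℂ) := by
  exact_mod_cast congrArg (Complex.ofReal) (bc_shift2 s n)

/-! ### The binomial series `(1 - x)^(-s) = ∑ bc s n * x^n` on the unit disc -/

lemma one_sub_mem_slitPlane {y : ℂ} (hy : ‖y‖ < 1) : (1 - y) ∈ slitPlane := by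
  rw [mem_slitPlane_iff]
  left
  simp only [sub_re, one_re]
  have h1 : |y.re| ≤ ‖y‖ := abs_re_le_norm y
  have := abs_le.mp h1
  linarith

lemma hasDerivAt_one_sub_cpow (c : ℂ) {y : ℂ} (hy : ‖y‖ < 1) :
    HasDerivAt (fun z : ℂ => (1 - z) ^ c) (-(c * (1 - y) ^ (c - 1))) y := by
  have h1 : HasDerivAt (fun z : ℂ => 1 - z) (-1) y := by
    simpa using (hasDerivAt_id y).const_sub 1
  have := h1.cpow_const (c := c) (one_sub_mem_slitPlane hy)
  simpa using this

lemma iteratedDeriv_one_sub_cpow (s : ℝ) (n : ℕ) :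
    ∀ y ∈ ball (0 : ℂ) 1,
      iteratedDeriv n (fun z : ℂ => (1 - z) ^ (-(s : ℂ))) y
        = (ascPochhammer ℂ n).eval (s : ℂ) * (1 - y) ^ (-(s : ℂ) - n) := by
  induction n with
  | zero => intro y hy; simp
  | succ n ih =>
    intro y hy
    rw [iteratedDeriv_succ]
    have hev : iteratedDeriv n (fun z : ℂ => (1 - z) ^ (-(s : ℂ)))
        =ᶠ[nhds y] fun w => (ascPochhammer ℂ n).eval (s : ℂ) * (1 - w) ^ (-(s : ℂ) - n) := by
      filter_upwards [isOpen_ball.mem_nhds hy] with w hw using ih w hw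
    rw [hev.deriv_eq]
    have hy' : ‖y‖ < 1 := mem_ball_zero_iff.mp hy
    rw [((hasDerivAt_one_sub_cpow (-(s : ℂ) - n) hy').const_mul
      ((ascPochhammer ℂ n).eval (s : ℂ))).deriv]
    rw [ascPochhammer_succ_eval]
    have he : (-(s : ℂ) - n) - 1 = -(s : ℂ) - (n + 1 : ℕ) := by push_cast; ring
    rw [he]
    push_cast
    ring

lemma asc_cast (s : ℝ) (n : ℕ) :
    (ascPochhammer ℂ n).eval (s : ℂ) = (((ascPochhammer ℝ n).eval s : ℝ) : ℂ) := by
  induction n with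
  | zero => simp
  | succ n ih =>
    rw [ascPochhammer_succ_eval, ascPochhammer_succ_eval, ih]
    push_cast
    ring

lemma hasSum_bc_cpow (s : ℝ) {x : ℂ} (hx : ‖x‖ < 1) :
    HasSum (fun n : ℕ => (bc s n : ℂ) * x ^ n) ((1 - x) ^ (-(s : ℂ))) := by
  have hdiff : DifferentiableOn ℂ (fun z : ℂ => (1 - z) ^ (-(s : ℂ))) (ball 0 1) := fun y hy =>
    ((hasDerivAt_one_sub_cpow _ (mem_ball_zero_iff.mp hy)).differentiableAt).differentiableWithinAt
  have H := Complex.hasSum_taylorSeries_on_ball hdiff (mem_ball_zero_iff.mpr hx)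
  have hfun : (fun n : ℕ => (bc s n : ℂ) * x ^ n)
      = fun n : ℕ => (n.factorial : ℂ)⁻¹ • (x - 0) ^ n •
          iteratedDeriv n (fun z : ℂ => (1 - z) ^ (-(s : ℂ))) 0 := by
    funext n
    rw [iteratedDeriv_one_sub_cpow s n 0 (by simp), asc_cast]
    have hne : (n.factorial : ℂ) ≠ 0 := by
      exact_mod_cast Nat.cast_ne_zero.mpr n.factorial_ne_zero
    simp only [bc, smul_eq_mul, sub_zero, one_cpow, mul_one]
    push_cast
    field_simp
  rw [hfun]
  exact H

/-! ### Infinite-sum helpers -/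

lemma hasSum_finsetSum {κ : Type*} (s : Finset κ) (F : κ → ℕ → ℂ) (A : κ → ℂ)
    (h : ∀ k ∈ s, HasSum (F k) (A k)) :
    HasSum (fun n => ∑ k ∈ s, F k n) (∑ k ∈ s, A k) := by
  classical
  induction s using Finset.induction_on with
  | empty => simpa using hasSum_zero
  | @insert k s hk ih =>
    simp only [Finset.sum_insert hk]
    exact (h _ (Finset.mem_insert_self _ _)).add
      (ih fun k' hk' => h _ (Finset.mem_insert_of_mem hk'))

lemma hasSum_shift {f : ℕ → ℂ} {a : ℂ} (h0 : f 0 = 0)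
    (h : HasSum (fun n => f (n + 1)) a) : HasSum f a := by
  have := (hasSum_nat_add_iff (f := f) 1).mp h
  simpa [h0] using this

lemma block {m : ℕ} (z : Fin m → ℂ) (u w : Fin m → ℂ) (c : ℕ → ℂ) (α β : ℕ)
    (S : Fin m → Fin m → ℂ)
    (h : ∀ i j, HasSum (fun n => c n * (z i * (starRingEnd ℂ) (z j)) ^ n) (S i j)) :
    HasSum (fun n => c n * (∑ i, (starRingEnd ℂ) (u i) * z i ^ (n + α)) *
        (starRingEnd ℂ) (∑ j, (starRingEnd ℂ) (w j) * z j ^ (n + β)))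
      (∑ i, ∑ j, ((starRingEnd ℂ) (u i) * z i ^ α) * S i j *
        (w j * (starRingEnd ℂ) (z j) ^ β)) := by
  have H : ∀ i : Fin m, HasSum
      (fun n => ∑ j, ((starRingEnd ℂ) (u i) * z i ^ α * (w j * (starRingEnd ℂ) (z j) ^ β)) *
        (c n * (z i * (starRingEnd ℂ) (z j)) ^ n))
      (∑ j, ((starRingEnd ℂ) (u i) * z i ^ α) * S i j * (w j * (starRingEnd ℂ) (z j) ^ β)) := by
    intro i
    refine hasSum_finsetSum _ _ _ fun j _ => ?_
    have := (h i j).mul_left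
      ((starRingEnd ℂ) (u i) * z i ^ α * (w j * (starRingEnd ℂ) (z j) ^ β))
    convert this using 1
    · rfl
    ring
  have H2 := hasSum_finsetSum Finset.univ _ _ (fun i (_ : i ∈ Finset.univ) => H i)
  have hfun : (fun n => c n * (∑ i, (starRingEnd ℂ) (u i) * z i ^ (n + α)) *
      (starRingEnd ℂ) (∑ j, (starRingEnd ℂ) (w j) * z j ^ (n + β)))
      = fun n => ∑ i, ∑ j,
        ((starRingEnd ℂ) (u i) * z i ^ α * (w j * (starRingEnd ℂ) (z j) ^ β)) *
        (c n * (z i * (starRingEnd ℂ) (z j)) ^ n) := by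
    funext n
    simp only [map_sum, map_mul, map_pow, Complex.conj_conj]
    rw [mul_assoc, Finset.sum_mul_sum, Finset.mul_sum]
    refine Finset.sum_congr rfl fun i _ => ?_
    rw [Finset.mul_sum]
    refine Finset.sum_congr rfl fun j _ => ?_
    rw [pow_add, pow_add, mul_pow]
    ring
  rw [hfun]
  exact H2

lemma final_step {w : ℂ} {r : ℕ → ℝ} (hr : ∀ n, 0 ≤ r n)
    (h : HasSum (fun n => ((r n : ℝ) : ℂ)) w) : 0 ≤ w.re ∧ w.im = 0 := by
  constructor
  · have hre := Complex.hasSum_re h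
    simp only [Complex.ofReal_re] at hre
    rw [← hre.tsum_eq]
    exact tsum_nonneg hr
  · have him := Complex.hasSum_im h
    simp only [Complex.ofReal_im] at him
    exact him.unique hasSum_zero

/-- For `λ > 1` and `μ > 0`, the kernel
`K_Γ(z,w) = [[(1-zw̄)^{-λ}, ∂_w̄ (1-zw̄)^{-λ}],[∂_z (1-zw̄)^{-λ}, ∂_z∂_w̄ (1-zw̄)^{-λ} + μ(1-zw̄)^{-λ-2}]]`
(the derivatives computed explicitly) is positive definite on the unit disc. -/
theorem homogeneous_rank_two_kernel_posdef (lam mu : ℝ) (hlam : 1 < lam) (hmu : 0 < mu) :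
    MatrixPosDefKernel (Metric.ball (0 : ℂ) 1) (fun z w =>
      !![(1 - z * (starRingEnd ℂ) w) ^ (-(lam : ℂ)),
         (lam : ℂ) * z * (1 - z * (starRingEnd ℂ) w) ^ (-(lam : ℂ) - 1);
         (lam : ℂ) * (starRingEnd ℂ) w * (1 - z * (starRingEnd ℂ) w) ^ (-(lam : ℂ) - 1),
         (lam : ℂ) * (1 - z * (starRingEnd ℂ) w) ^ (-(lam : ℂ) - 1)
           + (lam : ℂ) * ((lam : ℂ) + 1) * z * (starRingEnd ℂ) w *
               (1 - z * (starRingEnd ℂ) w) ^ (-(lam : ℂ) - 2)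
           + (mu : ℂ) * (1 - z * (starRingEnd ℂ) w) ^ (-(lam : ℂ) - 2)]) := by
  intro m z hz v
  have hzn : ∀ i, ‖z i‖ < 1 := fun i => mem_ball_zero_iff.mp (by simpa using hz i)
  have hx : ∀ i j, ‖z i * (starRingEnd ℂ) (z j)‖ < 1 := by
    intro i j
    rw [norm_mul, RCLike.norm_conj]
    nlinarith [hzn i, hzn j, norm_nonneg (z i), norm_nonneg (z j)]
  have he1 : (-(((lam + 1 : ℝ)) : ℂ)) = -(lam : ℂ) - 1 := by push_cast; ring
  have he2 : (-(((lam + 2 : ℝ)) : ℂ)) = -(lam : ℂ) - 2 := by push_cast; ring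
  have h1 : ∀ i j, HasSum (fun n => ((bc lam n : ℝ) : ℂ) * (z i * (starRingEnd ℂ) (z j)) ^ n)
      ((1 - z i * (starRingEnd ℂ) (z j)) ^ (-(lam : ℂ))) := fun i j =>
    hasSum_bc_cpow lam (hx i j)
  have h2 : ∀ i j, HasSum
      (fun n => ((lam : ℂ) * (bc (lam + 1) n : ℂ)) * (z i * (starRingEnd ℂ) (z j)) ^ n)
      ((lam : ℂ) * (1 - z i * (starRingEnd ℂ) (z j)) ^ (-(lam : ℂ) - 1)) := fun i j => by
    have := (he1 ▸ hasSum_bc_cpow (lam + 1) (hx i j)).mul_left (lam : ℂ)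
    simpa [mul_assoc] using this
  have h3 : ∀ i j, HasSum
      (fun n => ((lam : ℂ) * ((lam : ℂ) + 1) * (bc (lam + 2) n : ℂ)) *
        (z i * (starRingEnd ℂ) (z j)) ^ n)
      ((lam : ℂ) * ((lam : ℂ) + 1) *
        (1 - z i * (starRingEnd ℂ) (z j)) ^ (-(lam : ℂ) - 2)) := fun i j => by
    have := (he2 ▸ hasSum_bc_cpow (lam + 2) (hx i j)).mul_left ((lam : ℂ) * ((lam : ℂ) + 1))
    simpa [mul_assoc] using this
  have h4 : ∀ i j, HasSum
      (fun n => ((mu : ℂ) * (bc (lam + 2) n : ℂ)) * (z i * (starRingEnd ℂ) (z j)) ^ n)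
      ((mu : ℂ) * (1 - z i * (starRingEnd ℂ) (z j)) ^ (-(lam : ℂ) - 2)) := fun i j => by
    have := (he2 ▸ hasSum_bc_cpow (lam + 2) (hx i j)).mul_left (mu : ℂ)
    simpa [mul_assoc] using this
  -- the six blocks
  have hA := block z (fun i => v i 0) (fun j => v j 0) (fun n => ((bc lam n : ℝ) : ℂ)) 0 0 _ h1
  have hB := block z (fun i => v i 0) (fun j => v j 1)
    (fun n => (lam : ℂ) * (bc (lam + 1) n : ℂ)) 1 0 _ h2
  have hC := block z (fun i => v i 1) (fun j => v j 0)
    (fun n => (lam : ℂ) * (bc (lam + 1) n : ℂ)) 0 1 _ h2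
  have hD := block z (fun i => v i 1) (fun j => v j 1)
    (fun n => (lam : ℂ) * (bc (lam + 1) n : ℂ)) 0 0 _ h2
  have hE := block z (fun i => v i 1) (fun j => v j 1)
    (fun n => (lam : ℂ) * ((lam : ℂ) + 1) * (bc (lam + 2) n : ℂ)) 1 1 _ h3
  have hF := block z (fun i => v i 1) (fun j => v j 1)
    (fun n => (mu : ℂ) * (bc (lam + 2) n : ℂ)) 0 0 _ h4
  simp only [Nat.add_zero] at hA hB hC hD hE hF
  -- shift block B
  have heqB : (fun n => ((lam : ℂ) * (bc (lam + 1) n : ℂ)) *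
      (∑ i, (starRingEnd ℂ) (v i 0) * z i ^ (n + 1)) *
      (starRingEnd ℂ) (∑ j, (starRingEnd ℂ) (v j 1) * z j ^ n))
      = fun n : ℕ => (((n + 1 : ℕ) : ℂ)) * (bc lam (n + 1) : ℂ) *
      (∑ i, (starRingEnd ℂ) (v i 0) * z i ^ (n + 1)) *
      (starRingEnd ℂ) (∑ j, (starRingEnd ℂ) (v j 1) * z j ^ (n + 1 - 1)) := by
    funext n
    simp only [Nat.add_sub_cancel]
    push_cast
    rw [← bc_shiftC lam n]
  have hB' : HasSum (fun n : ℕ => (n : ℂ) * (bc lam n : ℂ) *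
      (∑ i, (starRingEnd ℂ) (v i 0) * z i ^ n) *
      (starRingEnd ℂ) (∑ j, (starRingEnd ℂ) (v j 1) * z j ^ (n - 1)))
      (∑ i, ∑ j, ((starRingEnd ℂ) (v i 0) * z i ^ 1) *
        ((lam : ℂ) * (1 - z i * (starRingEnd ℂ) (z j)) ^ (-(lam : ℂ) - 1)) *
        (v j 1 * (starRingEnd ℂ) (z j) ^ 0)) :=
    hasSum_shift (by simp) (heqB ▸ hB)
  -- shift block C
  have heqC : (fun n => ((lam : ℂ) * (bc (lam + 1) n : ℂ)) *
      (∑ i, (starRingEnd ℂ) (v i 1) * z i ^ n) *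
      (starRingEnd ℂ) (∑ j, (starRingEnd ℂ) (v j 0) * z j ^ (n + 1)))
      = fun n : ℕ => (((n + 1 : ℕ) : ℂ)) * (bc lam (n + 1) : ℂ) *
      (∑ i, (starRingEnd ℂ) (v i 1) * z i ^ (n + 1 - 1)) *
      (starRingEnd ℂ) (∑ j, (starRingEnd ℂ) (v j 0) * z j ^ (n + 1)) := by
    funext n
    simp only [Nat.add_sub_cancel]
    push_cast
    rw [← bc_shiftC lam n]
  have hC' : HasSum (fun n : ℕ => (n : ℂ) * (bc lam n : ℂ) *
      (∑ i, (starRingEnd ℂ) (v i 1) * z i ^ (n - 1)) *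
      (starRingEnd ℂ) (∑ j, (starRingEnd ℂ) (v j 0) * z j ^ n))
      (∑ i, ∑ j, ((starRingEnd ℂ) (v i 1) * z i ^ 0) *
        ((lam : ℂ) * (1 - z i * (starRingEnd ℂ) (z j)) ^ (-(lam : ℂ) - 1)) *
        (v j 0 * (starRingEnd ℂ) (z j) ^ 1)) :=
    hasSum_shift (by simp) (heqC ▸ hC)
  -- rewrite block D
  have heqD : (fun n => ((lam : ℂ) * (bc (lam + 1) n : ℂ)) *
      (∑ i, (starRingEnd ℂ) (v i 1) * z i ^ n) *
      (starRingEnd ℂ) (∑ j, (starRingEnd ℂ) (v j 1) * z j ^ n))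
      = fun n : ℕ => ((n : ℂ) + 1) * (bc lam (n + 1) : ℂ) *
      (∑ i, (starRingEnd ℂ) (v i 1) * z i ^ n) *
      (starRingEnd ℂ) (∑ j, (starRingEnd ℂ) (v j 1) * z j ^ n) := by
    funext n
    rw [← bc_shiftC lam n]
  have hD' := heqD ▸ hD
  -- shift block E
  have heqE : (fun n => ((lam : ℂ) * ((lam : ℂ) + 1) * (bc (lam + 2) n : ℂ)) *
      (∑ i, (starRingEnd ℂ) (v i 1) * z i ^ (n + 1)) *
      (starRingEnd ℂ) (∑ j, (starRingEnd ℂ) (v j 1) * z j ^ (n + 1)))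
      = fun n : ℕ => (((n + 1 : ℕ) : ℂ)) * ((((n + 1 : ℕ) : ℂ)) + 1) * (bc lam (n + 1 + 1) : ℂ) *
      (∑ i, (starRingEnd ℂ) (v i 1) * z i ^ (n + 1)) *
      (starRingEnd ℂ) (∑ j, (starRingEnd ℂ) (v j 1) * z j ^ (n + 1)) := by
    funext n
    simp only [show n + 1 + 1 = n + 2 from rfl]
    push_cast
    have e : ((n : ℂ) + 1 + 1) = (n : ℂ) + 2 := by ring
    rw [e, ← bc_shift2C lam n]
  have hE' : HasSum (fun n : ℕ => (n : ℂ) * ((n : ℂ) + 1) * (bc lam (n + 1) : ℂ) *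
      (∑ i, (starRingEnd ℂ) (v i 1) * z i ^ n) *
      (starRingEnd ℂ) (∑ j, (starRingEnd ℂ) (v j 1) * z j ^ n))
      (∑ i, ∑ j, ((starRingEnd ℂ) (v i 1) * z i ^ 1) *
        ((lam : ℂ) * ((lam : ℂ) + 1) *
          (1 - z i * (starRingEnd ℂ) (z j)) ^ (-(lam : ℂ) - 2)) *
        (v j 1 * (starRingEnd ℂ) (z j) ^ 1)) :=
    hasSum_shift (by simp) (heqE ▸ hE)
  -- combine D and E, then shift
  have hDE := hD'.add hE'
  have heqDE : (fun n : ℕ => ((n : ℂ) + 1) * (bc lam (n + 1) : ℂ) *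
      (∑ i, (starRingEnd ℂ) (v i 1) * z i ^ n) *
      (starRingEnd ℂ) (∑ j, (starRingEnd ℂ) (v j 1) * z j ^ n)
      + (n : ℂ) * ((n : ℂ) + 1) * (bc lam (n + 1) : ℂ) *
      (∑ i, (starRingEnd ℂ) (v i 1) * z i ^ n) *
      (starRingEnd ℂ) (∑ j, (starRingEnd ℂ) (v j 1) * z j ^ n))
      = fun n : ℕ => (((n + 1 : ℕ) : ℂ)) ^ 2 * (bc lam (n + 1) : ℂ) *
      (∑ i, (starRingEnd ℂ) (v i 1) * z i ^ (n + 1 - 1)) *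
      (starRingEnd ℂ) (∑ j, (starRingEnd ℂ) (v j 1) * z j ^ (n + 1 - 1)) := by
    funext n
    simp only [Nat.add_sub_cancel]
    push_cast
    ring
  have hW : HasSum (fun n : ℕ => (n : ℂ) ^ 2 * (bc lam n : ℂ) *
      (∑ i, (starRingEnd ℂ) (v i 1) * z i ^ (n - 1)) *
      (starRingEnd ℂ) (∑ j, (starRingEnd ℂ) (v j 1) * z j ^ (n - 1)))
      ((∑ i, ∑ j, ((starRingEnd ℂ) (v i 1) * z i ^ 0) *
        ((lam : ℂ) * (1 - z i * (starRingEnd ℂ) (z j)) ^ (-(lam : ℂ) - 1)) *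
        (v j 1 * (starRingEnd ℂ) (z j) ^ 0))
      + (∑ i, ∑ j, ((starRingEnd ℂ) (v i 1) * z i ^ 1) *
        ((lam : ℂ) * ((lam : ℂ) + 1) *
          (1 - z i * (starRingEnd ℂ) (z j)) ^ (-(lam : ℂ) - 2)) *
        (v j 1 * (starRingEnd ℂ) (z j) ^ 1))) :=
    hasSum_shift (by simp) (heqDE ▸ hDE)
  -- total
  have hTot := ((hA.add hB').add hC').add (hW.add hF)
  have heqTot : (fun n : ℕ =>
      (bc lam n : ℂ) * (∑ i, (starRingEnd ℂ) (v i 0) * z i ^ n) *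
        (starRingEnd ℂ) (∑ j, (starRingEnd ℂ) (v j 0) * z j ^ n)
      + (n : ℂ) * (bc lam n : ℂ) * (∑ i, (starRingEnd ℂ) (v i 0) * z i ^ n) *
        (starRingEnd ℂ) (∑ j, (starRingEnd ℂ) (v j 1) * z j ^ (n - 1))
      + (n : ℂ) * (bc lam n : ℂ) * (∑ i, (starRingEnd ℂ) (v i 1) * z i ^ (n - 1)) *
        (starRingEnd ℂ) (∑ j, (starRingEnd ℂ) (v j 0) * z j ^ n)
      + ((n : ℂ) ^ 2 * (bc lam n : ℂ) * (∑ i, (starRingEnd ℂ) (v i 1) * z i ^ (n - 1)) *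
        (starRingEnd ℂ) (∑ j, (starRingEnd ℂ) (v j 1) * z j ^ (n - 1))
      + ((mu : ℂ) * (bc (lam + 2) n : ℂ)) * (∑ i, (starRingEnd ℂ) (v i 1) * z i ^ n) *
        (starRingEnd ℂ) (∑ j, (starRingEnd ℂ) (v j 1) * z j ^ n)))
      = fun n : ℕ =>
      (((bc lam n * Complex.normSq ((∑ i, (starRingEnd ℂ) (v i 0) * z i ^ n)
          + (n : ℂ) * (∑ i, (starRingEnd ℂ) (v i 1) * z i ^ (n - 1)))
        + mu * bc (lam + 2) n *
          Complex.normSq (∑ i, (starRingEnd ℂ) (v i 1) * z i ^ n) : ℝ)) : ℂ) := by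
    funext n
    push_cast
    rw [← Complex.mul_conj, ← Complex.mul_conj]
    simp only [map_add, map_mul, map_sum, map_pow, Complex.conj_conj, map_natCast]
    ring
  have hKey := heqTot ▸ hTot
  refine final_step (r := fun n =>
      bc lam n * Complex.normSq ((∑ i, (starRingEnd ℂ) (v i 0) * z i ^ n)
        + (n : ℂ) * (∑ i, (starRingEnd ℂ) (v i 1) * z i ^ (n - 1)))
      + mu * bc (lam + 2) n * Complex.normSq (∑ i, (starRingEnd ℂ) (v i 1) * z i ^ n))
    (fun n => ?_) ?_
  · have h0 : (0 : ℝ) ≤ lam := by linarith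
    have h2' : (0 : ℝ) ≤ lam + 2 := by linarith
    exact add_nonneg (mul_nonneg (bc_nonneg h0 n) (Complex.normSq_nonneg _))
      (mul_nonneg (mul_nonneg hmu.le (bc_nonneg h2' n)) (Complex.normSq_nonneg _))
  · convert hKey using 1
    simp only [Fin.sum_univ_two, Matrix.cons_val', Matrix.cons_val_zero, Matrix.cons_val_one,
      Matrix.head_cons, Matrix.empty_val', Matrix.cons_val_fin_one, Matrix.head_fin_const]
    simp only [← Finset.sum_add_distrib]
    refine Finset.sum_congr rfl fun i _ => Finset.sum_congr rfl fun j _ => ?_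
    simp [Matrix.cons_val_zero, Matrix.cons_val_one, Matrix.head_cons]
    ring
end
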